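/- arXiv:2302.01581 — 8 statements merged into one kernel-verified Lean document; each statement's English description precedes it below -/
import Mathlib

section
/- For every z ∈ ℝ^K (K ≥ 1) there exists a unique real number τ such that Σ_{j=1}^K max(z_j − τ, 0) = 1. -/
open Finset

lemma strict_anti_aux (K : ℕ) (z : Fin K → ℝ) (a b : ℝ) (hab : a < b)
    (hb : ∑ j, max (z j - b) 0 = 1) :
    ∑ j, max (z j - b) 0 < ∑ j, max (z j - a) 0 := by
  -- there is j with z j > b
  have hpos : ∃ j : Fin K, 0 < max (z j - b) 0 := by
    by_contra h
    push_neg at h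
    have : ∑ j, max (z j - b) 0 ≤ 0 :=
      Finset.sum_nonpos (fun j _ => h j)
    linarith
  obtain ⟨j, hj⟩ := hpos
  have hzj : b < z j := by
    rcases le_or_gt (z j - b) 0 with h | h
    · simp [max_eq_right h] at hj
    · linarith
  apply Finset.sum_lt_sum
  · intro i _
    exact max_le_max (by linarith) le_rfl
  · refine ⟨j, Finset.mem_univ j, ?_⟩
    have h1 : max (z j - b) 0 = z j - b := max_eq_left (by linarith)
    have h2 : max (z j - a) 0 = z j - a := max_eq_left (by linarith)
    rw [h1, h2]; linarith

/-- for every `z ∈ ℝ^K` with `K ≥ 1`, there is a unique `τ ∈ ℝ`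
such that `Σ_{j=1}^K max(z_j − τ, 0) = 1`. -/
theorem existsUnique_tau (K : ℕ) (hK : 1 ≤ K) (z : Fin K → ℝ) :
    ∃! τ : ℝ, ∑ j, max (z j - τ) 0 = 1 := by
  set f : ℝ → ℝ := fun τ => ∑ j, max (z j - τ) 0 with hf
  have hne : (Finset.univ : Finset (Fin K)).Nonempty := by
    have : 0 < K := hK
    have : Nonempty (Fin K) := Fin.pos_iff_nonempty.mp this
    exact Finset.univ_nonempty
  set M : ℝ := Finset.univ.sup' hne z with hM
  have hcont : Continuous f := by
    apply continuous_finset_sum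
    intro j _
    exact (continuous_const.sub continuous_id).max continuous_const
  have hfM : f M = 0 := by
    apply Finset.sum_eq_zero
    intro j _
    have : z j ≤ M := Finset.le_sup' z (Finset.mem_univ j)
    simp [max_eq_right, this]
  have hfM1 : 1 ≤ f (M - 1) := by
    obtain ⟨i, _, hi⟩ := Finset.exists_mem_eq_sup' hne z
    have hterm : max (z i - (M - 1)) 0 = 1 := by
      have hzi : z i = M := by rw [hM, hi]
      have : z i - (M - 1) = 1 := by rw [hzi]; ring
      rw [this]; norm_num
    calc (1:ℝ) = max (z i - (M - 1)) 0 := hterm.symm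
      _ ≤ ∑ j, max (z j - (M - 1)) 0 :=
        Finset.single_le_sum (f := fun j => max (z j - (M - 1)) 0)
          (fun j _ => le_max_right _ _) (Finset.mem_univ i)
  have hle : M - 1 ≤ M := by linarith
  have := intermediate_value_Icc' hle hcont.continuousOn
  have h1mem : (1:ℝ) ∈ Set.Icc (f M) (f (M - 1)) := by
    rw [hfM]; exact ⟨by norm_num, hfM1⟩
  obtain ⟨τ, _, hτ⟩ := this h1mem
  refine ⟨τ, hτ, ?_⟩
  intro y hy
  rcases lt_trichotomy y τ with h | h | h
  · exfalso
    have h2 := strict_anti_aux K z y τ h hτ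
    have hτ' : f τ = ∑ j, max (z j - τ) 0 := rfl
    rw [hτ'] at hτ
    linarith
  · exact h
  · exfalso
    have h2 := strict_anti_aux K z τ y h hy
    have hτ' : f τ = ∑ j, max (z j - τ) 0 := rfl
    rw [hτ'] at hτ
    linarith
end

section
/- For every z ∈ ℝ^K (K ≥ 1), define k(z) := max{k ∈ {1,…,K} : 1 + k·z_(k) > Σ_{j≤k} z_(j)} and τ(z) := ((Σ_{j≤k(z)} z_(j)) − 1)/k(z), where z_(1) ≥ … ≥ z_(K) are the sorted coordinates of z. Then Σ_{j=1}^K max(z_j − τ(z), 0) = 1. -/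
open Finset

noncomputable section

/-- `z_(k)` for `k = 1, …, K`: the `k`-th largest coordinate of `z`, given a
sorting permutation `σ` (so that `i ↦ z (σ i)` is decreasing). -/
def sortedCoord {K : ℕ} (z : Fin K → ℝ) (σ : Equiv.Perm (Fin K)) (k : ℕ) : ℝ :=
  if h : k - 1 < K then z (σ ⟨k - 1, h⟩) else 0

open Classical in
/-- The set `{k ∈ {1,…,K} : 1 + k·z_(k) > Σ_{j ≤ k} z_(j)}`. -/
def kSet {K : ℕ} (z : Fin K → ℝ) (σ : Equiv.Perm (Fin K)) : Finset ℕ :=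
  (Finset.Icc 1 K).filter
    (fun k => 1 + (k : ℝ) * sortedCoord z σ k > ∑ j ∈ Finset.Icc 1 k, sortedCoord z σ j)

/-- `k(z) := max {k ∈ {1,…,K} : 1 + k·z_(k) > Σ_{j ≤ k} z_(j)}`. -/
def kFun {K : ℕ} (z : Fin K → ℝ) (σ : Equiv.Perm (Fin K)) : ℕ :=
  sSup (kSet z σ : Set ℕ)

/-- `τ(z) := ((Σ_{j ≤ k(z)} z_(j)) − 1) / k(z)`. -/
def tauFun {K : ℕ} (z : Fin K → ℝ) (σ : Equiv.Perm (Fin K)) : ℝ :=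
  ((∑ j ∈ Finset.Icc 1 (kFun z σ), sortedCoord z σ j) - 1) / (kFun z σ : ℝ)

/-- `Σ_{j=1}^K max(z_j − τ(z), 0) = 1`. -/
theorem sum_pos_part_tauFun_eq_one (K : ℕ) (hK : 1 ≤ K) (z : Fin K → ℝ)
    (σ : Equiv.Perm (Fin K)) (hσ : Antitone (fun i => z (σ i))) :
    ∑ j, max (z j - tauFun z σ) 0 = 1 := by
  classical
  set g : ℕ → ℝ := fun i => if h : i < K then z (σ ⟨i, h⟩) else 0 with hg
  have hsc : ∀ m : ℕ, sortedCoord z σ m = g (m - 1) := by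
    intro m; simp [sortedCoord, g]
  have hgmono : ∀ {i j : ℕ}, i ≤ j → j < K → g j ≤ g i := by
    intro i j hij hj
    have hi : i < K := lt_of_le_of_lt hij hj
    simp only [g, dif_pos hi, dif_pos hj]
    exact hσ (by exact_mod_cast hij : (⟨i, hi⟩ : Fin K) ≤ ⟨j, hj⟩)
  have hsum : ∀ m : ℕ, (∑ j ∈ Finset.Icc 1 m, sortedCoord z σ j)
      = ∑ i ∈ Finset.range m, g i := by
    intro m
    induction m with
    | zero => simp
    | succ n ih =>
      rw [Finset.sum_Icc_succ_top (by omega : 1 ≤ n + 1), Finset.sum_range_succ, ih, hsc]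
      simp
  have hbdd : BddAbove ((kSet z σ : Finset ℕ) : Set ℕ) := (kSet z σ).bddAbove
  have h1 : 1 ∈ kSet z σ := by
    have : (∑ j ∈ Finset.Icc 1 1, sortedCoord z σ j) = sortedCoord z σ 1 := by simp
    simp only [kSet, Finset.mem_filter, Finset.mem_Icc]
    refine ⟨⟨le_refl 1, hK⟩, ?_⟩
    rw [this]
    push_cast
    linarith
  have hne : ((kSet z σ : Finset ℕ) : Set ℕ).Nonempty := ⟨1, by exact_mod_cast h1⟩
  have hmem : kFun z σ ∈ kSet z σ := by
    have := Nat.sSup_mem hne hbdd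
    exact_mod_cast this
  set k := kFun z σ with hkdef
  obtain ⟨hmem1, hcond⟩ := Finset.mem_filter.mp hmem
  obtain ⟨hk1, hkK⟩ := Finset.mem_Icc.mp hmem1
  have hk0 : (0 : ℝ) < (k : ℝ) := by exact_mod_cast hk1
  set S : ℝ := ∑ i ∈ Finset.range k, g i with hS
  have hτ : tauFun z σ = (S - 1) / (k : ℝ) := by
    rw [tauFun, ← hkdef, hsum]
  set τ : ℝ := tauFun z σ with hτdef
  -- top coordinate strictly above τ
  have hcond' : S < 1 + (k : ℝ) * g (k - 1) := by
    have := hcond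
    rw [hsc, hsum] at this
    linarith
  have htop : τ < g (k - 1) := by
    rw [hτ, div_lt_iff₀ hk0]
    nlinarith
  have habove : ∀ i : ℕ, i < k → τ < g i := by
    intro i hi
    have hik : i ≤ k - 1 := by omega
    have hkK' : k - 1 < K := by omega
    exact lt_of_lt_of_le htop (hgmono hik hkK')
  -- coordinates from index k on are ≤ τ
  have hbelow : ∀ i : ℕ, k ≤ i → i < K → g i ≤ τ := by
    intro i hki hiK
    have hk1K : k + 1 ≤ K := by omega
    have hnot : k + 1 ∉ kSet z σ := by
      intro h
      have : k + 1 ≤ k := le_csSup hbdd (by exact_mod_cast h)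
      omega
    have hcondfail : ¬ (1 + ((k + 1 : ℕ) : ℝ) * sortedCoord z σ (k + 1)
        > ∑ j ∈ Finset.Icc 1 (k + 1), sortedCoord z σ j) := by
      intro h
      exact hnot (Finset.mem_filter.mpr ⟨Finset.mem_Icc.mpr ⟨by omega, hk1K⟩, h⟩)
    push_neg at hcondfail
    rw [hsc, hsum, Finset.sum_range_succ] at hcondfail
    have hgk : g k ≤ τ := by
      rw [hτ, le_div_iff₀ hk0]
      have : (k + 1 : ℕ) - 1 = k := by omega
      rw [this] at hcondfail
      push_cast at hcondfail
      nlinarith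
    exact le_trans (hgmono hki hiK) hgk
  -- reindex the sum
  have hre : (∑ j, max (z j - τ) 0) = ∑ i ∈ Finset.range K, max (g i - τ) 0 := by
    rw [← Equiv.sum_comp σ (fun j => max (z j - τ) 0)]
    rw [← Fin.sum_univ_eq_sum_range (fun i => max (g i - τ) 0) K]
    refine Finset.sum_congr rfl (fun i _ => ?_)
    simp [g, i.isLt]
  rw [hre]
  have hsplit : (∑ i ∈ Finset.range k, max (g i - τ) 0)
      + ∑ i ∈ Finset.Ico k K, max (g i - τ) 0 = ∑ i ∈ Finset.range K, max (g i - τ) 0 := by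
    rw [Finset.range_eq_Ico, Finset.range_eq_Ico]
    exact Finset.sum_Ico_consecutive (fun i => max (g i - τ) 0) (Nat.zero_le k) hkK
  rw [← hsplit]
  have hzero : (∑ i ∈ Finset.Ico k K, max (g i - τ) 0) = 0 := by
    refine Finset.sum_eq_zero (fun i hi => ?_)
    obtain ⟨h1, h2⟩ := Finset.mem_Ico.mp hi
    have := hbelow i h1 h2
    simp [max_eq_right, sub_nonpos.mpr this]
  have hpos : (∑ i ∈ Finset.range k, max (g i - τ) 0)
      = ∑ i ∈ Finset.range k, (g i - τ) := by
    refine Finset.sum_congr rfl (fun i hi => ?_)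
    have := habove i (Finset.mem_range.mp hi)
    exact max_eq_left (sub_nonneg.mpr this.le)
  rw [hzero, hpos, Finset.sum_sub_distrib, Finset.sum_const, Finset.card_range, ← hS]
  have : (k : ℝ) * τ = S - 1 := by
    rw [hτ, mul_div_cancel₀ _ hk0.ne']
  rw [nsmul_eq_mul, this]
  ring
end
end

section
/- For every z ∈ ℝ^K (K ≥ 1), the Euclidean projection of z onto the standard probability simplex Δ^{K−1} = {y ∈ ℝ^K : y_i ≥ 0 for all i, Σ_i y_i = 1}, i.e. the unique minimizer of ‖y − z‖² over y ∈ Δ^{K−1}, is given coordinatewise by sparsemax_i(z) = max(z_i − τ(z), 0), where τ(z) := ((Σ_{j≤k(z)} z_(j)) − 1)/k(z) and k(z) := max{k ∈ {1,…,K} : 1 + k·z_(k) > Σ_{j≤k} z_(j)} with z_(1) ≥ … ≥ z_(K) the sorted coordinates of z. -/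
open Finset

noncomputable section

/-- The standard probability simplex `Δ^{K−1} ⊆ ℝ^K`. -/
def stdSimplex' (K : ℕ) : Set (Fin K → ℝ) :=
  {y | (∀ i, 0 ≤ y i) ∧ ∑ i, y i = 1}

/-- the Euclidean projection of `z` onto the simplex (the unique
minimizer of `‖y − z‖²` over `Δ^{K−1}`) is given coordinatewise by
`sparsemax_i(z) = max(z_i − τ(z), 0)`. -/
theorem sparsemax_eq_pos_part (K : ℕ) (hK : 1 ≤ K) (z : Fin K → ℝ)
    (σ : Equiv.Perm (Fin K)) (hσ : Antitone (fun i => z (σ i))) :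
    (∃! p : Fin K → ℝ, p ∈ stdSimplex' K ∧
        ∀ y ∈ stdSimplex' K, ∑ i, (p i - z i) ^ 2 ≤ ∑ i, (y i - z i) ^ 2) ∧
    ∀ p : Fin K → ℝ,
      (p ∈ stdSimplex' K ∧
        ∀ y ∈ stdSimplex' K, ∑ i, (p i - z i) ^ 2 ≤ ∑ i, (y i - z i) ^ 2) →
      ∀ i, p i = max (z i - tauFun z σ) 0 := by
  classical
  set k := kFun z σ with hk_def
  set τ := tauFun z σ with hτ_def
  -- `1 ∈ kSet`
  have h1mem : 1 ∈ kSet z σ := by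
    unfold kSet
    rw [Finset.mem_filter]
    constructor
    · rw [Finset.mem_Icc]; omega
    · rw [Finset.Icc_self, Finset.sum_singleton]
      push_cast
      linarith
  have hne : (kSet z σ : Set ℕ).Nonempty := ⟨1, h1mem⟩
  have hbdd : BddAbove (kSet z σ : Set ℕ) := (kSet z σ).bddAbove
  have hkmem : k ∈ kSet z σ := Nat.sSup_mem hne hbdd
  have hkmax : ∀ m ∈ kSet z σ, m ≤ k := fun m hm => le_csSup hbdd (by exact_mod_cast hm)
  have hk1 : 1 ≤ k := by
    have := (Finset.mem_filter.mp hkmem).1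
    exact (Finset.mem_Icc.mp this).1
  have hkK : k ≤ K := by
    have := (Finset.mem_filter.mp hkmem).1
    exact (Finset.mem_Icc.mp this).2
  have hkpos : (0:ℝ) < (k:ℝ) := by exact_mod_cast hk1
  set S : ℝ := ∑ j ∈ Finset.Icc 1 k, sortedCoord z σ j with hS_def
  have hkineq : 1 + (k:ℝ) * sortedCoord z σ k > S :=
    (Finset.mem_filter.mp hkmem).2
  have hτ_eq : τ = (S - 1) / (k:ℝ) := rfl
  have hkτ : (k:ℝ) * τ = S - 1 := by
    rw [hτ_eq]; field_simp
  -- z_(k) > τ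
  have hzk_gt : τ < sortedCoord z σ k := by
    have : (k:ℝ) * τ < (k:ℝ) * sortedCoord z σ k := by linarith
    exact lt_of_mul_lt_mul_left this (le_of_lt hkpos)
  -- for sorted index i < k : z (σ i) > τ
  have hkm1 : k - 1 < K := by omega
  have h_lt : ∀ i : Fin K, (i:ℕ) < k → τ < z (σ i) := by
    intro i hi
    have hle : i ≤ (⟨k - 1, hkm1⟩ : Fin K) := by
      change (i:ℕ) ≤ k - 1; omega
    have := hσ hle
    have hsc : sortedCoord z σ k = z (σ ⟨k - 1, hkm1⟩) := by
      unfold sortedCoord; rw [dif_pos hkm1]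
    simp only at this
    linarith [hzk_gt, hsc ▸ hzk_gt]
  -- for sorted index i ≥ k : z (σ i) ≤ τ
  have h_ge : ∀ i : Fin K, k ≤ (i:ℕ) → z (σ i) ≤ τ := by
    intro i hi
    have hkK' : k < K := lt_of_le_of_lt hi i.isLt
    have hnot : k + 1 ∉ kSet z σ := by
      intro hmem
      have := hkmax _ hmem; omega
    have hsc1 : sortedCoord z σ (k+1) = z (σ ⟨k, hkK'⟩) := by
      unfold sortedCoord
      have : k + 1 - 1 = k := by omega
      rw [this, dif_pos hkK']
    have hnotineq : ¬ (1 + ((k:ℝ)+1) * sortedCoord z σ (k+1) >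
        ∑ j ∈ Finset.Icc 1 (k+1), sortedCoord z σ j) := by
      intro hgt
      apply hnot
      unfold kSet
      rw [Finset.mem_filter]
      refine ⟨Finset.mem_Icc.mpr ⟨by omega, by omega⟩, ?_⟩
      push_cast
      exact hgt
    push_neg at hnotineq
    have hsplit : ∑ j ∈ Finset.Icc 1 (k+1), sortedCoord z σ j
        = S + sortedCoord z σ (k+1) := by
      rw [hS_def, Finset.sum_Icc_succ_top (by omega)]
    rw [hsplit] at hnotineq
    have hle_τ : sortedCoord z σ (k+1) ≤ τ := by
      have : (k:ℝ) * sortedCoord z σ (k+1) ≤ (k:ℝ) * τ := by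
        linarith
      exact le_of_mul_le_mul_left this hkpos
    have hle2 : z (σ i) ≤ z (σ ⟨k, hkK'⟩) := by
      have : (⟨k, hkK'⟩ : Fin K) ≤ i := by change k ≤ (i:ℕ); exact hi
      exact hσ this
    rw [← hsc1] at hle2
    linarith
  -- the candidate
  set p : Fin K → ℝ := fun i => max (z i - τ) 0 with hp_def
  have hp_nonneg : ∀ i, 0 ≤ p i := fun i => le_max_right _ _
  -- sum of p equals 1
  set g : ℕ → ℝ := fun j => if h : j < K then z (σ ⟨j, h⟩) else 0 with hg_def
  have hSsum : ∀ n, n ≤ K →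
      ∑ j ∈ Finset.Icc 1 n, sortedCoord z σ j = ∑ j ∈ Finset.range n, g j := by
    intro n
    induction n with
    | zero => intro _; simp
    | succ m ih =>
      intro hm
      rw [Finset.sum_Icc_succ_top (by omega), Finset.sum_range_succ, ih (by omega)]
      congr 1
  have hpsum : ∑ i, p i = 1 := by
    have h1 : ∑ i, p i = ∑ i, p (σ i) := (Equiv.sum_comp σ p).symm
    have h2 : ∀ i : Fin K, p (σ i) = if (i:ℕ) < k then g (i:ℕ) - τ else 0 := by
      intro i
      simp only [hp_def]
      by_cases hik : (i:ℕ) < k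
      · rw [if_pos hik]
        have hzi := h_lt i hik
        have hgi : g (i:ℕ) = z (σ i) := by
          simp only [hg_def, i.isLt, dif_pos, Fin.eta]
        rw [hgi]
        exact max_eq_left (by linarith)
      · rw [if_neg hik]
        exact max_eq_right (by linarith [h_ge i (by omega)])
    rw [h1]
    calc ∑ i : Fin K, p (σ i)
        = ∑ i : Fin K, (if (i:ℕ) < k then g (i:ℕ) - τ else 0) := by
          exact Finset.sum_congr rfl (fun i _ => h2 i)
      _ = ∑ j ∈ Finset.range K, (if j < k then g j - τ else 0) :=
          Fin.sum_univ_eq_sum_range (fun j => if j < k then g j - τ else 0) K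
      _ = ∑ j ∈ Finset.range k, (if j < k then g j - τ else 0)
            + ∑ j ∈ Finset.Ico k K, (if j < k then g j - τ else 0) :=
          (Finset.sum_range_add_sum_Ico _ hkK).symm
      _ = ∑ j ∈ Finset.range k, (g j - τ) + 0 := by
          congr 1
          · exact Finset.sum_congr rfl (fun j hj =>
              if_pos (Finset.mem_range.mp hj))
          · exact Finset.sum_eq_zero (fun j hj =>
              if_neg (by have := (Finset.mem_Ico.mp hj).1; omega))
      _ = (∑ j ∈ Finset.range k, g j) - (k:ℝ) * τ := by
          rw [Finset.sum_sub_distrib, Finset.sum_const, Finset.card_range]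
          ring
      _ = S - (k:ℝ) * τ := by rw [hS_def, hSsum k hkK]
      _ = 1 := by rw [hkτ]; ring
  have hp_mem : p ∈ stdSimplex' K := ⟨hp_nonneg, hpsum⟩
  -- z i - p i = min (z i) τ
  have hzp : ∀ i, z i - p i = min (z i) τ := by
    intro i
    by_cases h : z i ≤ τ
    · rw [hp_def]
      simp only
      rw [max_eq_right (by linarith), min_eq_left h]
      ring
    · push_neg at h
      rw [hp_def]
      simp only
      rw [max_eq_left (by linarith), min_eq_right (le_of_lt h)]
      ring
  -- variational inequality
  have hvar : ∀ y ∈ stdSimplex' K, ∑ i, (y i - p i) * min (z i) τ ≤ 0 := by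
    intro y hy
    have hy1 : ∀ i, 0 ≤ y i := hy.1
    have hy2 : ∑ i, y i = 1 := hy.2
    have hA : ∑ i, y i * min (z i) τ ≤ τ := by
      calc ∑ i, y i * min (z i) τ ≤ ∑ i, y i * τ :=
            Finset.sum_le_sum (fun i _ =>
              mul_le_mul_of_nonneg_left (min_le_right _ _) (hy1 i))
        _ = (∑ i, y i) * τ := by rw [← Finset.sum_mul]
        _ = τ := by rw [hy2, one_mul]
    have hB : ∑ i, p i * min (z i) τ = τ := by
      have : ∀ i, p i * min (z i) τ = p i * τ := by
        intro i
        by_cases h : z i ≤ τ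
        · have hp0 : p i = 0 := by
            rw [hp_def]; simp only
            exact max_eq_right (by linarith)
          rw [hp0]; ring
        · push_neg at h
          rw [min_eq_right (le_of_lt h)]
      calc ∑ i, p i * min (z i) τ = ∑ i, p i * τ :=
            Finset.sum_congr rfl (fun i _ => this i)
        _ = (∑ i, p i) * τ := by rw [← Finset.sum_mul]
        _ = τ := by rw [hpsum, one_mul]
    have : ∑ i, (y i - p i) * min (z i) τ
        = ∑ i, y i * min (z i) τ - ∑ i, p i * min (z i) τ := by
      rw [← Finset.sum_sub_distrib]
      exact Finset.sum_congr rfl (fun i _ => by ring)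
    rw [this, hB]
    linarith
  -- p is a minimizer
  have hexpand : ∀ y : Fin K → ℝ, ∑ i, (y i - z i) ^ 2
      = ∑ i, (p i - z i) ^ 2 + ∑ i, (y i - p i) ^ 2
        - 2 * ∑ i, (y i - p i) * (z i - p i) := by
    intro y
    rw [← Finset.sum_add_distrib, Finset.mul_sum, ← Finset.sum_sub_distrib]
    exact Finset.sum_congr rfl (fun i _ => by ring)
  have hp_min : ∀ y ∈ stdSimplex' K, ∑ i, (p i - z i) ^ 2 ≤ ∑ i, (y i - z i) ^ 2 := by
    intro y hy
    have h1 := hvar y hy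
    have h2 : ∑ i, (y i - p i) * (z i - p i) ≤ 0 := by
      calc ∑ i, (y i - p i) * (z i - p i)
          = ∑ i, (y i - p i) * min (z i) τ :=
            Finset.sum_congr rfl (fun i _ => by rw [hzp i])
        _ ≤ 0 := h1
    have h3 : (0:ℝ) ≤ ∑ i, (y i - p i) ^ 2 :=
      Finset.sum_nonneg (fun i _ => sq_nonneg _)
    rw [hexpand y]
    linarith
  -- any minimizer equals p
  have huniq : ∀ q : Fin K → ℝ,
      (q ∈ stdSimplex' K ∧
        ∀ y ∈ stdSimplex' K, ∑ i, (q i - z i) ^ 2 ≤ ∑ i, (y i - z i) ^ 2) →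
      ∀ i, q i = p i := by
    intro q ⟨hqmem, hqmin⟩
    have h1 : ∑ i, (q i - z i) ^ 2 ≤ ∑ i, (p i - z i) ^ 2 := hqmin p hp_mem
    have h2 : ∑ i, (q i - p i) * (z i - p i) ≤ 0 := by
      calc ∑ i, (q i - p i) * (z i - p i)
          = ∑ i, (q i - p i) * min (z i) τ :=
            Finset.sum_congr rfl (fun i _ => by rw [hzp i])
        _ ≤ 0 := hvar q hqmem
    have h3 := hexpand q
    have h4 : ∑ i, (q i - p i) ^ 2 ≤ 0 := by linarith
    have h5 : ∀ i ∈ Finset.univ, (q i - p i) ^ 2 = 0 := by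
      intro i _
      have := Finset.sum_nonneg (fun i (_ : i ∈ Finset.univ) => sq_nonneg (q i - p i))
      have hz : ∑ i, (q i - p i) ^ 2 = 0 := le_antisymm h4 this
      exact (Finset.sum_eq_zero_iff_of_nonneg
        (fun i _ => sq_nonneg (q i - p i))).mp hz i (Finset.mem_univ i)
    intro i
    have := h5 i (Finset.mem_univ i)
    have := pow_eq_zero_iff (n := 2) (by omega) |>.mp this
    linarith
  refine ⟨⟨p, ⟨hp_mem, hp_min⟩, ?_⟩, ?_⟩
  · intro q hq
    funext i
    exact huniq q hq i
  · intro q hq i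
    exact huniq q hq i
end
end

section
/- For z ∈ ℝ^K (K ≥ 1) and y ∈ ℝ^K, the following are equivalent: (i) y is the Euclidean projection of z onto the standard probability simplex Δ^{K−1} (the unique minimizer of ‖y − z‖² over Δ^{K−1}); (ii) y ∈ Δ^{K−1} and there exists τ ∈ ℝ such that y_i = max(z_i − τ, 0) for every i ∈ {1,…,K}. -/
open Finset

noncomputable section

lemma pos_part_min (K : ℕ) (z : Fin K → ℝ) (τ : ℝ)
    (y : Fin K → ℝ) (hy : ∀ i, y i = max (z i - τ) 0)
    (hys : ∑ i, y i = 1) :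
    ∀ w ∈ stdSimplex' K, ∑ i, (y i - z i) ^ 2 ≤ ∑ i, (w i - z i) ^ 2 := by
  intro w hw
  obtain ⟨hw0, hw1⟩ := hw
  have key : ∀ i, (y i - z i)^2 - 2*τ*(w i - y i) ≤ (w i - z i)^2 := by
    intro i
    rcases le_or_gt (z i - τ) 0 with h | h
    · have hyi : y i = 0 := by rw [hy i]; exact max_eq_right h
      have := hw0 i
      nlinarith [sq_nonneg (w i - z i), sq_nonneg (w i)]
    · have hyi : y i = z i - τ := by rw [hy i]; exact max_eq_left h.le
      nlinarith [sq_nonneg (w i - z i + τ)]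
  have hsum : ∑ i, ((y i - z i)^2 - 2*τ*(w i - y i)) ≤ ∑ i, (w i - z i)^2 :=
    Finset.sum_le_sum (fun i _ => key i)
  have hzero : ∑ i, (w i - y i) = 0 := by
    rw [Finset.sum_sub_distrib, hw1, hys]; ring
  calc ∑ i, (y i - z i)^2
      = ∑ i, ((y i - z i)^2 - 2*τ*(w i - y i)) := by
        rw [Finset.sum_sub_distrib, ← Finset.mul_sum, hzero]; ring
    _ ≤ ∑ i, (w i - z i)^2 := hsum

lemma exists_tau (K : ℕ) (hK : 1 ≤ K) (z : Fin K → ℝ) :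
    ∃ τ : ℝ, ∑ i, max (z i - τ) 0 = 1 := by
  have hne : (Finset.univ : Finset (Fin K)).Nonempty := ⟨⟨0, hK⟩, mem_univ _⟩
  set b := Finset.univ.sup' hne z with hb
  set f : ℝ → ℝ := fun τ => ∑ i, max (z i - τ) 0 with hf
  have hcont : Continuous f := by
    apply continuous_finset_sum
    intro i _
    exact (continuous_const.sub continuous_id).max continuous_const
  have hfb : f b = 0 := by
    apply Finset.sum_eq_zero
    intro i _
    exact max_eq_right (by linarith [Finset.le_sup' z (mem_univ i)])
  obtain ⟨j, -, hj⟩ := Finset.exists_mem_eq_sup' hne z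
  have hfa : 1 ≤ f (b - 1) := by
    have h1 : max (z j - (b-1)) 0 = 1 := by
      rw [max_eq_left] <;> rw [hb, hj] <;> linarith
    calc (1:ℝ) = max (z j - (b-1)) 0 := h1.symm
      _ ≤ ∑ i, max (z i - (b-1)) 0 :=
          Finset.single_le_sum (f := fun i => max (z i - (b-1)) 0)
            (fun i _ => le_max_right _ _) (mem_univ j)
  have hIVT := intermediate_value_Icc' (by linarith : b - 1 ≤ b) hcont.continuousOn
  have h1mem : (1:ℝ) ∈ Set.Icc (f b) (f (b-1)) := ⟨by rw [hfb]; linarith, hfa⟩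
  obtain ⟨τ, -, hτ⟩ := hIVT h1mem
  exact ⟨τ, hτ⟩

/-- `y` is the Euclidean projection of `z` onto `Δ^{K−1}` iff
`y ∈ Δ^{K−1}` and `y_i = max(z_i − τ, 0)` for some `τ ∈ ℝ` and all `i`. -/
theorem projection_iff_pos_part_form (K : ℕ) (hK : 1 ≤ K) (z y : Fin K → ℝ) :
    (y ∈ stdSimplex' K ∧
        ∀ w ∈ stdSimplex' K, ∑ i, (y i - z i) ^ 2 ≤ ∑ i, (w i - z i) ^ 2) ↔
    (y ∈ stdSimplex' K ∧ ∃ τ : ℝ, ∀ i, y i = max (z i - τ) 0) := by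
  constructor
  · rintro ⟨hy, hmin⟩
    refine ⟨hy, ?_⟩
    obtain ⟨τ, hτ⟩ := exists_tau K hK z
    set y' : Fin K → ℝ := fun i => max (z i - τ) 0 with hy'
    have hy's : ∑ i, y' i = 1 := hτ
    have hy'mem : y' ∈ stdSimplex' K := ⟨fun i => le_max_right _ _, hy's⟩
    have hy'min := pos_part_min K z τ y' (fun i => rfl) hy's
    refine ⟨τ, fun i => ?_⟩
    -- uniqueness of the minimizer
    have hA : ∑ i, (y i - z i)^2 ≤ ∑ i, (y' i - z i)^2 := hmin y' hy'mem
    have hB : ∑ i, (y' i - z i)^2 ≤ ∑ i, (y i - z i)^2 := hy'min y hy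
    set m : Fin K → ℝ := fun i => (y i + y' i)/2 with hm
    have hmmem : m ∈ stdSimplex' K := by
      constructor
      · intro i
        have := hy.1 i
        have := hy'mem.1 i
        simp only [hm]
        linarith
      · have h1 : ∑ i, m i = ∑ i, (y i / 2 + y' i / 2) := by
          refine Finset.sum_congr rfl fun i _ => ?_
          simp only [hm]; ring
        rw [h1, Finset.sum_add_distrib, ← Finset.sum_div, ← Finset.sum_div, hy.2, hy's]
        norm_num
    have hmid : ∑ i, (m i - z i)^2 =
        (∑ i, (y i - z i)^2)/2 + (∑ i, (y' i - z i)^2)/2 - (∑ i, (y i - y' i)^2)/4 := by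
      have h2 : ∑ i, (m i - z i)^2 =
          ∑ i, ((y i - z i)^2/2 + (y' i - z i)^2/2 - (y i - y' i)^2/4) := by
        refine Finset.sum_congr rfl fun i _ => ?_
        simp only [hm]; ring
      rw [h2, Finset.sum_sub_distrib, Finset.sum_add_distrib, ← Finset.sum_div,
        ← Finset.sum_div, ← Finset.sum_div]
    have hAm : ∑ i, (y i - z i)^2 ≤ ∑ i, (m i - z i)^2 := hmin m hmmem
    have hS : ∑ i, (y i - y' i)^2 ≤ 0 := by
      rw [hmid] at hAm; linarith
    have hS0 : ∑ i, (y i - y' i)^2 = 0 :=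
      le_antisymm hS (Finset.sum_nonneg fun i _ => sq_nonneg _)
    have := (Finset.sum_eq_zero_iff_of_nonneg (fun i _ => sq_nonneg (y i - y' i))).mp hS0
      i (mem_univ i)
    have : y i = y' i := by nlinarith [this]
    exact this
  · rintro ⟨hy, τ, hτ⟩
    exact ⟨hy, pos_part_min K z τ y hτ hy.2⟩

end
end

section
/- For every z ∈ ℝ^K (K ≥ 1), k(z) = |S(z)|, where k(z) := max{k ∈ {1,…,K} : 1 + k·z_(k) > Σ_{j≤k} z_(j)} (with z_(1) ≥ … ≥ z_(K) the sorted coordinates of z) and S(z) := {j ∈ {1,…,K} : sparsemax_j(z) > 0} is the support of the Euclidean projection of z onto the standard probability simplex. -/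
open Finset

noncomputable section

/-- Pairwise exchange optimality condition for the Euclidean projection onto
the simplex: if `p i > 0` then `p i - z i ≤ p j - z j`. -/
lemma exchange {K : ℕ} (z p : Fin K → ℝ)
    (hpnn : ∀ i, 0 ≤ p i) (hpsum : ∑ i, p i = 1)
    (hpmin : ∀ y ∈ stdSimplex' K, ∑ i, (p i - z i) ^ 2 ≤ ∑ i, (y i - z i) ^ 2)
    {i j : Fin K} (hij : i ≠ j) (hpi : 0 < p i) :
    p i - z i ≤ p j - z j := by
  have hji : j ≠ i := Ne.symm hij
  by_contra hcon
  push_neg at hcon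
  set D : ℝ := (p j - z j) - (p i - z i) with hD
  have hDneg : D < 0 := by simp only [hD]; linarith
  set ε : ℝ := min (p i) (-D/2) with hε
  have hε0 : 0 < ε := lt_min hpi (by linarith)
  have hεpi : ε ≤ p i := min_le_left _ _
  have hεD : ε ≤ -D/2 := min_le_right _ _
  set y : Fin K → ℝ := fun t => if t = i then p i - ε else if t = j then p j + ε else p t with hy
  have hymem : y ∈ stdSimplex' K := by
    constructor
    · intro t
      by_cases ht : t = i
      · simp only [hy, ht, if_pos rfl]; linarith
      · by_cases htj : t = j
        · subst htj; simp [hy, hji]; have := hpnn t; linarith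
        · simp only [hy, if_neg ht, if_neg htj]; exact hpnn t
    · have step : ∀ t, y t = p t + ((if t = i then (-ε : ℝ) else 0) + (if t = j then ε else 0)) := by
        intro t
        by_cases ht : t = i
        · have htj : t ≠ j := ht ▸ hij
          simp [hy, ht, if_neg htj, hij]; ring
        · by_cases htj : t = j <;> simp [hy, if_neg ht, htj, if_neg hji]
      calc ∑ t, y t = ∑ t, (p t + ((if t = i then (-ε:ℝ) else 0) + (if t = j then ε else 0))) :=
            Finset.sum_congr rfl (fun t _ => step t)
        _ = 1 := by
            rw [Finset.sum_add_distrib, Finset.sum_add_distrib, Finset.sum_ite_eq',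
              Finset.sum_ite_eq']
            simp [hpsum]
  have hle := hpmin y hymem
  have hdiff : ∑ t, ((y t - z t) ^ 2 - (p t - z t) ^ 2) = 2*ε*D + 2*ε^2 := by
    have hsub : ∑ t ∈ ({i, j} : Finset (Fin K)), ((y t - z t) ^ 2 - (p t - z t) ^ 2)
        = ∑ t, ((y t - z t) ^ 2 - (p t - z t) ^ 2) := by
      apply Finset.sum_subset (Finset.subset_univ _)
      intro t _ ht
      simp only [Finset.mem_insert, Finset.mem_singleton, not_or] at ht
      simp [hy, if_neg ht.1, if_neg ht.2]
    rw [← hsub, Finset.sum_pair hij]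
    have hyi : y i = p i - ε := by simp [hy]
    have hyj : y j = p j + ε := by simp [hy, if_neg hji]
    rw [hyi, hyj, hD]; ring
  have hsum : ∑ t, ((y t - z t) ^ 2 - (p t - z t) ^ 2)
      = (∑ t, (y t - z t) ^ 2) - ∑ t, (p t - z t) ^ 2 := Finset.sum_sub_distrib _ _
  have h0 : (0:ℝ) ≤ 2*ε*D + 2*ε^2 := by rw [← hdiff, hsum]; linarith
  nlinarith [hε0, hεD]

open Classical in
lemma sum_sorted_eq {K : ℕ} (z : Fin K → ℝ) (σ : Equiv.Perm (Fin K)) (m : ℕ) (hm : m ≤ K) :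
    ∑ j ∈ Finset.Icc 1 m, sortedCoord z σ j
      = ∑ i ∈ Finset.univ.filter (fun i : Fin K => (i : ℕ) < m), z (σ i) := by
  refine (Finset.sum_bij (fun (a : Fin K) (_ : a ∈ Finset.univ.filter
      (fun i : Fin K => (i : ℕ) < m)) => (a : ℕ) + 1) ?_ ?_ ?_ ?_).symm
  · intro a ha
    simp only [Finset.mem_filter, Finset.mem_univ, true_and] at ha
    simp only [Finset.mem_Icc]
    omega
  · intro a ha b hb hab
    have hab' : (a : ℕ) + 1 = (b : ℕ) + 1 := hab
    exact Fin.val_injective (by omega)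
  · intro b hb
    simp only [Finset.mem_Icc] at hb
    refine ⟨⟨b - 1, by omega⟩, ?_, by simp; omega⟩
    simp only [Finset.mem_filter, Finset.mem_univ, true_and]
    omega
  · intro a ha
    simp only [sortedCoord]
    rw [dif_pos (by omega : (a : ℕ) + 1 - 1 < K)]
    have ha' : (⟨(a : ℕ) + 1 - 1, by omega⟩ : Fin K) = a := by
      ext; simp
    rw [ha']

open Classical in
/-- `k(z) = |S(z)|`, where `S(z)` is the support of the Euclidean
projection `p = sparsemax(z)` of `z` onto the simplex. -/
theorem kFun_eq_card_support (K : ℕ) (hK : 1 ≤ K) (z : Fin K → ℝ)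
    (σ : Equiv.Perm (Fin K)) (hσ : Antitone (fun i => z (σ i)))
    (p : Fin K → ℝ)
    (hp : p ∈ stdSimplex' K ∧
      ∀ y ∈ stdSimplex' K, ∑ i, (p i - z i) ^ 2 ≤ ∑ i, (y i - z i) ^ 2) :
    kFun z σ = (Finset.univ.filter (fun j => 0 < p j)).card := by
  classical
  obtain ⟨⟨hpnn, hpsum⟩, hpmin⟩ := hp
  -- the support is nonempty
  have hex : ∃ i, 0 < p i := by
    by_contra h
    push_neg at h
    have h0 : ∀ i, p i = 0 := fun i => le_antisymm (h i) (hpnn i)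
    rw [Finset.sum_congr rfl (fun i _ => h0 i)] at hpsum
    simp at hpsum
  obtain ⟨i₀, hi₀⟩ := hex
  set lam : ℝ := z i₀ - p i₀ with hlam
  have exch : ∀ {i j : Fin K}, i ≠ j → 0 < p i → p i - z i ≤ p j - z j :=
    fun hij hpi => exchange z p hpnn hpsum hpmin hij hpi
  have hval : ∀ i, 0 < p i → z i - p i = lam := by
    intro i hi
    by_cases h : i = i₀
    · rw [h]
    · have h1 := exch h hi
      have h2 := exch (Ne.symm h) hi₀
      simp only [hlam]; linarith
  have hsupp : ∀ i, (0 < p i ↔ lam < z i) := by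
    intro i
    constructor
    · intro hi; have := hval i hi; linarith
    · intro hi
      rcases lt_or_eq_of_le (hpnn i) with h | h
      · exact h
      · exfalso
        have hne : i₀ ≠ i := by
          intro h'; rw [← h'] at h; exact absurd hi₀ (by linarith)
        have := exch hne hi₀
        rw [← h] at this
        simp only [hlam] at hi
        linarith
  set S : Finset (Fin K) := Finset.univ.filter (fun j => 0 < p j) with hS
  set c : ℕ := S.card with hc
  have hSz : S = Finset.univ.filter (fun j => lam < z j) :=
    Finset.filter_congr (fun x _ => hsupp x)
  set T : Finset (Fin K) := Finset.univ.filter (fun i => lam < z (σ i)) with hT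
  have hTS : T.card = c := by
    rw [hc, hSz, hT, Finset.card_filter, Finset.card_filter]
    exact Equiv.sum_comp σ (fun j => if lam < z j then 1 else 0)
  have hzT : ∑ i ∈ T, z (σ i) = ∑ i ∈ S, z i := by
    rw [hSz, hT, Finset.sum_filter, Finset.sum_filter]
    exact Equiv.sum_comp σ (fun j => if lam < z j then z j else 0)
  have hcK : c ≤ K := by
    rw [hc]
    exact le_trans (Finset.card_filter_le _ _) (by simp)
  have hc1 : 1 ≤ c := by
    rw [hc]
    have : i₀ ∈ S := by simp [hS, hi₀]
    exact Finset.card_pos.mpr ⟨i₀, this⟩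
  -- T is an initial segment of length c
  have hT_iff : ∀ i : Fin K, (lam < z (σ i) ↔ (i : ℕ) < c) := by
    intro i
    constructor
    · intro hi
      have hIic : Finset.Iic i ⊆ T := by
        intro j hj
        simp only [Finset.mem_Iic] at hj
        simp only [hT, Finset.mem_filter, Finset.mem_univ, true_and]
        exact lt_of_lt_of_le hi (hσ hj)
      have := Finset.card_le_card hIic
      rw [Fin.card_Iic, hTS] at this
      omega
    · intro hi
      by_contra hni
      have hsub : T ⊆ Finset.Iio i := by
        intro j hj
        simp only [hT, Finset.mem_filter, Finset.mem_univ, true_and] at hj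
        simp only [Finset.mem_Iio]
        by_contra hge
        push_neg at hge
        exact hni (lt_of_lt_of_le hj (hσ hge))
      have := Finset.card_le_card hsub
      rw [Fin.card_Iio, hTS] at this
      omega
  -- sums over the support
  have hpS : ∑ i ∈ S, p i = 1 := by
    rw [← hpsum]
    refine Finset.sum_subset (Finset.subset_univ S) ?_
    intro x _ hx
    simp only [hS, Finset.mem_filter, Finset.mem_univ, true_and, not_lt] at hx
    exact le_antisymm hx (hpnn x)
  have hzS : ∑ i ∈ S, z i = 1 + c * lam := by
    have h1 : ∑ i ∈ S, p i = ∑ i ∈ S, (z i - lam) := by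
      refine Finset.sum_congr rfl ?_
      intro i hi
      simp only [hS, Finset.mem_filter, Finset.mem_univ, true_and] at hi
      have := hval i hi
      linarith
    rw [hpS, Finset.sum_sub_distrib, Finset.sum_const, nsmul_eq_mul] at h1
    rw [← hc] at h1
    linarith
  have hfilterT : Finset.univ.filter (fun i : Fin K => (i : ℕ) < c) = T :=
    Finset.filter_congr (fun x _ => (hT_iff x).symm)
  have hsum_c : ∑ j ∈ Finset.Icc 1 c, sortedCoord z σ j = 1 + c * lam := by
    rw [sum_sorted_eq z σ c hcK, hfilterT, hzT, hzS]
  -- sortedCoord for 1 ≤ k ≤ K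
  have hsorted : ∀ k : ℕ, 1 ≤ k → k ≤ K →
      ∀ h : k - 1 < K, sortedCoord z σ k = z (σ ⟨k - 1, h⟩) := by
    intro k hk1 hkK h
    simp only [sortedCoord, dif_pos h]
  -- c belongs to kSet
  have hc_mem : c ∈ kSet z σ := by
    have hcm1 : c - 1 < K := by omega
    have hzc : lam < z (σ ⟨c - 1, hcm1⟩) := by
      rw [hT_iff]
      simp; omega
    simp only [kSet, Finset.mem_filter, Finset.mem_Icc]
    refine ⟨⟨hc1, hcK⟩, ?_⟩
    rw [hsum_c, hsorted c hc1 hcK hcm1]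
    have hcpos : (0:ℝ) < (c:ℝ) := by exact_mod_cast hc1
    nlinarith
  -- every member of kSet is ≤ c
  have hub : ∀ k ∈ kSet z σ, k ≤ c := by
    intro k hk
    simp only [kSet, Finset.mem_filter, Finset.mem_Icc] at hk
    obtain ⟨⟨hk1, hkK⟩, hkgt⟩ := hk
    by_contra h
    push_neg at h
    have hkm1 : k - 1 < K := by omega
    have hsk : sortedCoord z σ k ≤ z (σ ⟨k - 1, hkm1⟩) := by
      rw [hsorted k hk1 hkK hkm1]
    have hskl : z (σ ⟨k - 1, hkm1⟩) ≤ lam := by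
      by_contra hgt
      push_neg at hgt
      have := (hT_iff ⟨k - 1, hkm1⟩).mp hgt
      simp at this
      omega
    -- split the sum
    have hsplit : ∑ j ∈ Finset.Icc 1 k, sortedCoord z σ j
        = (∑ j ∈ Finset.Icc 1 c, sortedCoord z σ j) + ∑ j ∈ Finset.Ioc c k, sortedCoord z σ j := by
      rw [show Finset.Icc 1 k = Finset.Ioc 0 k by rw [← Finset.Icc_add_one_left_eq_Ioc]; rfl,
        show Finset.Icc 1 c = Finset.Ioc 0 c by rw [← Finset.Icc_add_one_left_eq_Ioc]; rfl]
      exact (Finset.sum_Ioc_consecutive _ (Nat.zero_le c) (le_of_lt h)).symm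
    have hlower : (Finset.Ioc c k).card • sortedCoord z σ k
        ≤ ∑ j ∈ Finset.Ioc c k, sortedCoord z σ j := by
      refine Finset.card_nsmul_le_sum _ _ _ ?_
      intro j hj
      simp only [Finset.mem_Ioc] at hj
      have hj1 : 1 ≤ j := by omega
      have hjK : j ≤ K := le_trans hj.2 hkK
      have hjm1 : j - 1 < K := by omega
      rw [hsorted j hj1 hjK hjm1, hsorted k hk1 hkK hkm1]
      exact hσ (by simp; omega)
    rw [Nat.card_Ioc, nsmul_eq_mul] at hlower
    have hcast : ((k - c : ℕ) : ℝ) = (k:ℝ) - (c:ℝ) := by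
      have : c ≤ k := le_of_lt h
      push_cast [Nat.cast_sub this]
      ring
    rw [hcast] at hlower
    rw [hsplit, hsum_c] at hkgt
    have hck : (c:ℝ) < (k:ℝ) := by exact_mod_cast h
    have hsl : sortedCoord z σ k ≤ lam := le_trans hsk hskl
    have hc0 : (0:ℝ) ≤ (c:ℝ) := Nat.cast_nonneg c
    nlinarith
  have hgreat : IsGreatest (↑(kSet z σ) : Set ℕ) c := ⟨hc_mem, fun k hk => hub k hk⟩
  calc kFun z σ = c := hgreat.csSup_eq
    _ = _ := by rw [hc, hS]
end
end

section
/- For every z ∈ ℝ^K (K ≥ 1), the unique real number τ(z) satisfying Σ_j max(z_j − τ(z), 0) = 1 is given by τ(z) = ((Σ_{j∈S(z)} z_j) − 1)/|S(z)|, where S(z) := {j : sparsemax_j(z) > 0} is the support of the Euclidean projection sparsemax(z) of z onto the standard probability simplex. -/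
open Finset

noncomputable section

open Classical in
/-- the unique `τ` with `Σ_j max(z_j − τ, 0) = 1` equals
`((Σ_{j ∈ S(z)} z_j) − 1)/|S(z)|`, where `S(z)` is the support of the Euclidean
projection `p = sparsemax(z)` of `z` onto the simplex. -/
theorem tau_eq_support_formula (K : ℕ) (hK : 1 ≤ K) (z : Fin K → ℝ)
    (p : Fin K → ℝ)
    (hp : p ∈ stdSimplex' K ∧
      ∀ y ∈ stdSimplex' K, ∑ i, (p i - z i) ^ 2 ≤ ∑ i, (y i - z i) ^ 2)
    (τ : ℝ) (hτ : ∑ j, max (z j - τ) 0 = 1) :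
    τ = ((∑ j ∈ Finset.univ.filter (fun j => 0 < p j), z j) - 1) /
        ((Finset.univ.filter (fun j => 0 < p j)).card : ℝ) := by
  classical
  set q : Fin K → ℝ := fun j => max (z j - τ) 0 with hq
  have hq0 : ∀ j, 0 ≤ q j := fun j => le_max_right _ _
  have hqsum : ∑ j, q j = 1 := hτ
  have hqz : ∀ j, z j - q j ≤ τ := by
    intro j; rcases le_or_gt τ (z j) with h | h
    · have : q j = z j - τ := max_eq_left (by linarith)
      rw [this]; linarith
    · have : q j = 0 := max_eq_right (by linarith)
      rw [this]; linarith
  have hqτ : ∀ j, q j * (z j - q j) = τ * q j := by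
    intro j; rcases le_or_gt τ (z j) with h | h
    · have : q j = z j - τ := max_eq_left (by linarith)
      rw [this]; ring
    · have : q j = 0 := max_eq_right (by linarith)
      rw [this]; ring
  have hvar : ∀ y ∈ stdSimplex' K, ∑ j, (y j - q j) * (z j - q j) ≤ 0 := by
    intro y hy
    have h1 : ∑ j, y j * (z j - q j) ≤ τ := by
      calc ∑ j, y j * (z j - q j) ≤ ∑ j, y j * τ := by
            apply Finset.sum_le_sum; intro j _
            exact mul_le_mul_of_nonneg_left (hqz j) (hy.1 j)
        _ = τ := by rw [← Finset.sum_mul, hy.2, one_mul]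
    have h2 : ∑ j, q j * (z j - q j) = τ := by
      simp_rw [hqτ]; rw [← Finset.mul_sum, hqsum, mul_one]
    have h3 : ∑ j, (y j - q j) * (z j - q j)
        = ∑ j, y j * (z j - q j) - ∑ j, q j * (z j - q j) := by
      rw [← Finset.sum_sub_distrib]
      exact Finset.sum_congr rfl (fun j _ => by ring)
    rw [h3, h2]; linarith
  have hkey : ∑ j, (q j - z j) ^ 2 + ∑ j, (p j - q j) ^ 2 ≤ ∑ j, (p j - z j) ^ 2 := by
    have hv := hvar p hp.1
    have hexp : ∑ j, (p j - z j) ^ 2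
        = ∑ j, ((q j - z j) ^ 2 + (p j - q j) ^ 2 - 2 * ((p j - q j) * (z j - q j))) :=
      Finset.sum_congr rfl (fun j _ => by ring)
    have : ∑ j, ((q j - z j) ^ 2 + (p j - q j) ^ 2 - 2 * ((p j - q j) * (z j - q j)))
        = ∑ j, (q j - z j) ^ 2 + ∑ j, (p j - q j) ^ 2
          - 2 * ∑ j, (p j - q j) * (z j - q j) := by
      rw [Finset.sum_sub_distrib, Finset.sum_add_distrib, Finset.mul_sum]
    rw [hexp, this]
    linarith
  have hle : ∑ j, (p j - z j) ^ 2 ≤ ∑ j, (q j - z j) ^ 2 := hp.2 q ⟨hq0, hqsum⟩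
  have hnn : ∀ j ∈ Finset.univ, (0:ℝ) ≤ (p j - q j) ^ 2 := fun j _ => sq_nonneg _
  have hzero : ∑ j, (p j - q j) ^ 2 = 0 :=
    le_antisymm (by linarith) (Finset.sum_nonneg hnn)
  have hpq : ∀ j, p j = q j := by
    intro j
    have h := (Finset.sum_eq_zero_iff_of_nonneg hnn).mp hzero j (Finset.mem_univ j)
    have := pow_eq_zero_iff (n := 2) (by norm_num) |>.mp h
    linarith [this]
  set S := Finset.univ.filter (fun j => 0 < p j) with hS
  have hmemS : ∀ j, j ∈ S ↔ τ < z j := by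
    intro j
    simp only [hS, Finset.mem_filter, Finset.mem_univ, true_and, hpq j, hq, lt_max_iff,
      lt_self_iff_false, or_false, sub_pos]
  have hpS : ∀ j ∈ S, p j = z j - τ := by
    intro j hj
    rw [hpq j]
    exact max_eq_left (by have := (hmemS j).mp hj; linarith)
  have hsumS : ∑ j ∈ S, p j = 1 := by
    rw [← hp.1.2]
    apply Finset.sum_subset (Finset.subset_univ S)
    intro j _ hj
    have h1 : ¬ 0 < p j := by
      intro h; exact hj (Finset.mem_filter.mpr ⟨Finset.mem_univ j, h⟩)
    have h2 : 0 ≤ p j := by rw [hpq j]; exact hq0 j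
    linarith
  have heq : (∑ j ∈ S, z j) - (S.card : ℝ) * τ = 1 := by
    rw [← hsumS, Finset.sum_congr rfl hpS, Finset.sum_sub_distrib, Finset.sum_const,
      nsmul_eq_mul]
  have hcard : (S.card : ℝ) ≠ 0 := by
    intro h
    rw [h, zero_mul, sub_zero] at heq
    have : S = ∅ := Finset.card_eq_zero.mp (by exact_mod_cast h)
    rw [this, Finset.sum_empty] at heq
    norm_num at heq
  field_simp
  linarith [heq]
end
end

section
/- Let z ∈ ℝ^K (K ≥ 1) and let τ(z) be the unique real number with Σ_j max(z_j − τ(z), 0) = 1. If z_j ≠ τ(z) for every j ∈ {1,…,K} (i.e. z is not a splitting point where the support changes), then the map sparsemax : ℝ^K → ℝ^K (Euclidean projection onto the standard probability simplex) is differentiable at z, and its Jacobian satisfies ∂sparsemax_i(z)/∂z_j = δ_{ij} − 1/|S(z)| when both i, j ∈ S(z), and ∂sparsemax_i(z)/∂z_j = 0 otherwise, where S(z) = {j : sparsemax_j(z) > 0} and δ_{ij} is the Kronecker delta. -/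
open Finset

noncomputable section

/-- `sparsemax(w)`: the Euclidean projection of `w` onto the simplex, i.e. the
(unique) minimizer of `‖y − w‖²` over `Δ^{K−1}`, as a map `ℝ^K → ℝ^K`. -/
def sparsemax (K : ℕ) (w : Fin K → ℝ) : Fin K → ℝ :=
  Classical.epsilon (fun p => p ∈ stdSimplex' K ∧
    ∀ y ∈ stdSimplex' K, ∑ i, (p i - w i) ^ 2 ≤ ∑ i, (y i - w i) ^ 2)

lemma sparsemax_exists (K : ℕ) (hK : 1 ≤ K) (w : Fin K → ℝ) :
    ∃ p, p ∈ stdSimplex' K ∧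
      ∀ y ∈ stdSimplex' K, ∑ i, (p i - w i) ^ 2 ≤ ∑ i, (y i - w i) ^ 2 := by
  have hcomp : IsCompact (stdSimplex' K) := isCompact_stdSimplex ℝ (Fin K)
  have hne : (stdSimplex' K).Nonempty := by
    refine ⟨fun _ => (K : ℝ)⁻¹, fun i => by positivity, ?_⟩
    simp [Finset.sum_const, Finset.card_univ]
    field_simp
  have hcont : ContinuousOn (fun y : Fin K → ℝ => ∑ i, (y i - w i) ^ 2) (stdSimplex' K) := by
    apply Continuous.continuousOn
    continuity
  obtain ⟨p, hp, hmin⟩ := hcomp.exists_isMinOn hne hcont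
  exact ⟨p, hp, fun y hy => hmin hy⟩

lemma sparsemax_unique (K : ℕ) (w p q : Fin K → ℝ)
    (hp : p ∈ stdSimplex' K ∧ ∀ y ∈ stdSimplex' K, ∑ i, (p i - w i) ^ 2 ≤ ∑ i, (y i - w i) ^ 2)
    (hq : q ∈ stdSimplex' K ∧ ∀ y ∈ stdSimplex' K, ∑ i, (q i - w i) ^ 2 ≤ ∑ i, (y i - w i) ^ 2) :
    p = q := by
  set m : Fin K → ℝ := fun i => (p i + q i) / 2 with hm
  have hmS : m ∈ stdSimplex' K := by
    refine ⟨fun i => by have := hp.1.1 i; have := hq.1.1 i; simp [hm]; linarith, ?_⟩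
    have : ∑ i, m i = (∑ i, p i + ∑ i, q i) / 2 := by
      rw [← Finset.sum_add_distrib, ← Finset.sum_div]
    rw [this, hp.1.2, hq.1.2]; norm_num
  have hid : ∑ i, (m i - w i) ^ 2 =
      (∑ i, (p i - w i) ^ 2 + ∑ i, (q i - w i) ^ 2) / 2 - (∑ i, (p i - q i) ^ 2) / 4 := by
    rw [← Finset.sum_add_distrib, Finset.sum_div, Finset.sum_div, ← Finset.sum_sub_distrib]
    apply Finset.sum_congr rfl
    intro i _
    simp only [hm]; ring
  have h1 : ∑ i, (p i - w i) ^ 2 ≤ ∑ i, (m i - w i) ^ 2 := hp.2 m hmS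
  have h2 : ∑ i, (q i - w i) ^ 2 ≤ ∑ i, (p i - w i) ^ 2 := hq.2 p hp.1
  have h3 : ∑ i, (p i - w i) ^ 2 ≤ ∑ i, (q i - w i) ^ 2 := hp.2 q hq.1
  have hzero : ∑ i, (p i - q i) ^ 2 = 0 := by
    have hge : 0 ≤ ∑ i, (p i - q i) ^ 2 := Finset.sum_nonneg fun i _ => sq_nonneg _
    nlinarith
  funext i
  have := (Finset.sum_eq_zero_iff_of_nonneg (fun i _ => sq_nonneg (p i - q i))).mp hzero i (Finset.mem_univ i)
  have := sq_eq_zero_iff.mp this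
  linarith

open Classical in
/-- away from splitting points (`z_j ≠ τ(z)` for all `j`),
`sparsemax` is differentiable at `z` with Jacobian
`∂sparsemax_i/∂z_j = δ_{ij} − 1/|S(z)|` if `i, j ∈ S(z)` and `0` otherwise. -/
theorem sparsemax_jacobian (K : ℕ) (hK : 1 ≤ K) (z : Fin K → ℝ)
    (τ : ℝ) (hτ : ∑ j, max (z j - τ) 0 = 1) (hsplit : ∀ j, z j ≠ τ) :
    DifferentiableAt ℝ (sparsemax K) z ∧
    ∀ i j, fderiv ℝ (sparsemax K) z (Pi.single j 1) i =
      if 0 < sparsemax K z i ∧ 0 < sparsemax K z j then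
        (if i = j then (1 : ℝ) else 0) -
          1 / ((Finset.univ.filter (fun l => 0 < sparsemax K z l)).card : ℝ)
      else 0 := by
  classical
  set S : Finset (Fin K) := univ.filter (fun j => τ < z j) with hSdef
  have hmemS : ∀ j, j ∈ S ↔ τ < z j := by
    intro j; simp [hSdef]
  -- S is nonempty
  have hS_ne : S.Nonempty := by
    by_contra h
    rw [Finset.not_nonempty_iff_eq_empty] at h
    have : ∑ j, max (z j - τ) 0 = 0 := by
      apply Finset.sum_eq_zero
      intro j _
      have hj : ¬ τ < z j := by
        intro hlt; exact (Finset.eq_empty_iff_forall_notMem.mp h j) ((hmemS j).mpr hlt)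
      have : z j - τ ≤ 0 := by linarith [not_lt.mp hj]
      exact max_eq_right this
    rw [this] at hτ; norm_num at hτ
  set s : ℝ := (S.card : ℝ) with hsdef
  have hs_pos : 0 < s := by
    rw [hsdef]
    exact_mod_cast Finset.card_pos.mpr hS_ne
  have hs_ne : s ≠ 0 := ne_of_gt hs_pos
  -- the threshold function and local affine formula
  set t : (Fin K → ℝ) → ℝ := fun w => (∑ l ∈ S, w l - 1) / s with htdef
  set g : (Fin K → ℝ) → (Fin K → ℝ) := fun w j => if j ∈ S then w j - t w else 0 with hgdef
  -- τ is the threshold at z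
  have hτsum : ∑ l ∈ S, z l - s * τ = 1 := by
    have h1 : ∑ j, max (z j - τ) 0 = ∑ l ∈ S, (z l - τ) := by
      rw [← Finset.sum_filter_add_sum_filter_not univ (fun j => τ < z j)
        (fun j => max (z j - τ) 0)]
      have h2 : ∑ j ∈ univ.filter (fun j => ¬ τ < z j), max (z j - τ) 0 = 0 := by
        apply Finset.sum_eq_zero
        intro j hj
        rw [Finset.mem_filter] at hj
        have : z j - τ ≤ 0 := by linarith [not_lt.mp hj.2]
        exact max_eq_right this
      rw [h2, add_zero]
      apply Finset.sum_congr rfl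
      intro j hj
      rw [Finset.mem_filter] at hj
      exact max_eq_left (by linarith [hj.2])
    rw [h1] at hτ
    rw [Finset.sum_sub_distrib, Finset.sum_const, nsmul_eq_mul] at hτ
    linarith [hτ]
  have htz : t z = τ := by
    rw [htdef]
    field_simp
    linarith [hτsum]
  -- values of g on good points are projections
  have hkey : ∀ w : Fin K → ℝ, (∀ j, (j ∈ S → t w < w j) ∧ (j ∉ S → w j < t w)) →
      g w ∈ stdSimplex' K ∧
        ∀ y ∈ stdSimplex' K, ∑ i, (g w i - w i) ^ 2 ≤ ∑ i, (y i - w i) ^ 2 := by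
    intro w hw
    have hsumS : ∑ i ∈ S, (w i - t w) = 1 := by
      rw [Finset.sum_sub_distrib, Finset.sum_const, nsmul_eq_mul, htdef]
      field_simp
      rw [← hsdef]; ring
    have hsum_g : ∑ i, g w i = 1 := by
      rw [hgdef]
      rw [Finset.sum_ite_mem, Finset.univ_inter]
      exact hsumS
    have hg_nonneg : ∀ i, 0 ≤ g w i := by
      intro i
      rw [hgdef]
      by_cases hi : i ∈ S
      · simp only [hi, if_true]; linarith [(hw i).1 hi]
      · simp [hi]
    refine ⟨⟨hg_nonneg, hsum_g⟩, ?_⟩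
    intro y hy
    obtain ⟨hy_nonneg, hy_sum⟩ := hy
    -- inner product inequality
    have hfS : univ.filter (fun i => i ∈ S) = S := by ext i; simp
    have hip : 0 ≤ ∑ i, (g w i - w i) * (y i - g w i) := by
      have hsplit2 : ∑ i, (g w i - w i) * (y i - g w i) =
          ∑ i ∈ S, (-(t w)) * (y i - (w i - t w)) +
          ∑ i ∈ univ.filter (fun i => ¬ (i ∈ S)), (-(w i)) * y i := by
        rw [← Finset.sum_filter_add_sum_filter_not univ (fun i => i ∈ S)
          (fun i => (g w i - w i) * (y i - g w i)), hfS]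
        congr 1
        · apply Finset.sum_congr rfl
          intro i hi
          simp only [hgdef]
          rw [if_pos hi]; ring
        · apply Finset.sum_congr rfl
          intro i hi
          have hiS : i ∉ S := by simpa using hi
          simp only [hgdef]
          rw [if_neg hiS]; ring
      rw [hsplit2]
      have hySsplit : ∑ i ∈ S, y i + ∑ i ∈ univ.filter (fun i => ¬ (i ∈ S)), y i = 1 := by
        have := Finset.sum_filter_add_sum_filter_not univ (fun i => i ∈ S) y
        rw [hfS] at this
        rw [this]; exact hy_sum
      have e1 : ∑ i ∈ S, (-(t w)) * (y i - (w i - t w)) =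
          -(t w) * (∑ i ∈ S, y i) + t w := by
        rw [← Finset.mul_sum, Finset.sum_sub_distrib, hsumS]; ring
      have e2 : ∑ i ∈ S, (-(t w)) * (y i - (w i - t w)) +
          ∑ i ∈ univ.filter (fun i => ¬ (i ∈ S)), (-(w i)) * y i =
          ∑ i ∈ univ.filter (fun i => ¬ (i ∈ S)), (t w - w i) * y i := by
        rw [e1]
        have h3 : ∑ i ∈ univ.filter (fun i => ¬ (i ∈ S)), (t w - w i) * y i =
            t w * (∑ i ∈ univ.filter (fun i => ¬ (i ∈ S)), y i) -
            ∑ i ∈ univ.filter (fun i => ¬ (i ∈ S)), w i * y i := by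
          rw [Finset.mul_sum, ← Finset.sum_sub_distrib]
          apply Finset.sum_congr rfl; intro i _; ring
        have h4 : ∑ i ∈ univ.filter (fun i => ¬ (i ∈ S)), (-(w i)) * y i =
            - ∑ i ∈ univ.filter (fun i => ¬ (i ∈ S)), w i * y i := by
          rw [← Finset.sum_neg_distrib]
          apply Finset.sum_congr rfl; intro i _; ring
        have hB : ∑ i ∈ univ.filter (fun i => ¬ (i ∈ S)), y i = 1 - ∑ i ∈ S, y i := by
          linarith [hySsplit]
        rw [h3, h4, hB]; ring
      rw [e2]
      apply Finset.sum_nonneg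
      intro i hi
      rw [Finset.mem_filter] at hi
      have h1 : w i < t w := (hw i).2 hi.2
      have h2 : 0 ≤ y i := hy_nonneg i
      nlinarith
    have hexp : ∑ i, (y i - w i) ^ 2 = ∑ i, (g w i - w i) ^ 2 +
        (∑ i, (y i - g w i) ^ 2 + 2 * ∑ i, (g w i - w i) * (y i - g w i)) := by
      rw [Finset.mul_sum, ← Finset.sum_add_distrib, ← Finset.sum_add_distrib]
      apply Finset.sum_congr rfl
      intro i _; ring
    have hsq : 0 ≤ ∑ i, (y i - g w i) ^ 2 := Finset.sum_nonneg fun i _ => sq_nonneg _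
    linarith
  -- continuity of t
  have hcont_t : Continuous t := by
    rw [htdef]
    exact ((continuous_finset_sum S fun l _ => continuous_apply l).sub continuous_const).div_const s
  -- eventually the good conditions hold
  have hev_cond : ∀ᶠ w in nhds z, ∀ j, (j ∈ S → t w < w j) ∧ (j ∉ S → w j < t w) := by
    rw [Filter.eventually_all]
    intro j
    by_cases hj : j ∈ S
    · have hlt : t z < z j := by rw [htz]; exact (hmemS j).mp hj
      have := hcont_t.continuousAt.eventually_lt (continuous_apply j).continuousAt hlt
      filter_upwards [this] with w hw
      exact ⟨fun _ => hw, fun h => absurd hj h⟩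
    · have hlt : z j < t z := by
        rw [htz]
        rcases lt_or_eq_of_le (not_lt.mp (fun h => hj ((hmemS j).mpr h))) with h | h
        · exact h
        · exact absurd h (hsplit j)
      have := (continuous_apply j).continuousAt.eventually_lt hcont_t.continuousAt hlt
      filter_upwards [this] with w hw
      exact ⟨fun h => absurd h hj, fun _ => hw⟩
  -- sparsemax = g eventually
  have hcond_z : ∀ j, (j ∈ S → t z < z j) ∧ (j ∉ S → z j < t z) := hev_cond.self_of_nhds
  have hsp_eq : ∀ w : Fin K → ℝ, (∀ j, (j ∈ S → t w < w j) ∧ (j ∉ S → w j < t w)) →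
      sparsemax K w = g w := by
    intro w hw
    have hP := Classical.epsilon_spec (sparsemax_exists K hK w)
    exact sparsemax_unique K w _ _ hP (hkey w hw)
  have hev : sparsemax K =ᶠ[nhds z] g := by
    filter_upwards [hev_cond] with w hw using hsp_eq w hw
  have hspz : sparsemax K z = g z := hsp_eq z hcond_z
  -- support of sparsemax z = S
  have hpos_iff : ∀ i, 0 < sparsemax K z i ↔ i ∈ S := by
    intro i
    rw [hspz, hgdef]
    by_cases hi : i ∈ S
    · simp only [hi, if_true, iff_true]
      linarith [(hcond_z i).1 hi]
    · simp [hi]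
  -- the derivative as a linear map
  set ℓ : (Fin K → ℝ) →ₗ[ℝ] (Fin K → ℝ) :=
    { toFun := fun v j => if j ∈ S then v j - (∑ l ∈ S, v l) / s else 0
      map_add' := by
        intro u v; funext j
        by_cases hj : j ∈ S <;>
          simp [hj, Finset.sum_add_distrib, add_div] <;> ring
      map_smul' := by
        intro c v; funext j
        by_cases hj : j ∈ S
        · simp only [hj, if_true, RingHom.id_apply, Pi.smul_apply, smul_eq_mul]
          rw [← Finset.mul_sum]; ring
        · simp [hj] } with hldef
  set L : (Fin K → ℝ) →L[ℝ] (Fin K → ℝ) := LinearMap.toContinuousLinearMap ℓ with hLdef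
  set c : Fin K → ℝ := fun j => if j ∈ S then 1 / s else 0 with hcdef
  have hgaff : g = fun w => L w + c := by
    funext w j
    simp only [hgdef, hLdef, hcdef, LinearMap.coe_toContinuousLinearMap', hldef,
      LinearMap.coe_mk, AddHom.coe_mk, Pi.add_apply]
    by_cases hj : j ∈ S
    · simp only [hj, if_true, htdef]; ring
    · simp [hj]
  have hgderiv : HasFDerivAt g L z := by
    rw [hgaff]
    exact (L.hasFDerivAt).add_const c
  have hderiv : HasFDerivAt (sparsemax K) L z :=
    hgderiv.congr_of_eventuallyEq hev
  refine ⟨hderiv.differentiableAt, ?_⟩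
  intro i j
  rw [hderiv.fderiv]
  have hcard : ((univ.filter (fun l => 0 < sparsemax K z l)).card : ℝ) = s := by
    congr 2
    ext l
    simp only [Finset.mem_filter, Finset.mem_univ, true_and]
    rw [hpos_iff l, hmemS l]
  have hLapp : L (Pi.single j 1) i =
      if i ∈ S then (Pi.single j 1 : Fin K → ℝ) i -
        (∑ l ∈ S, (Pi.single j 1 : Fin K → ℝ) l) / s else 0 := rfl
  have hsingle_i : (Pi.single j 1 : Fin K → ℝ) i = if i = j then (1:ℝ) else 0 := by
    simp [Pi.single_apply]
  have hsingle_sum : ∑ l ∈ S, (Pi.single j 1 : Fin K → ℝ) l =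
      if j ∈ S then (1:ℝ) else 0 := by
    simp [Pi.single_apply, Finset.sum_ite_eq' S j]
  rw [hsingle_i, hsingle_sum] at hLapp
  rw [hcard]
  rw [hLapp]
  by_cases hi : i ∈ S <;> by_cases hj : j ∈ S
  · simp [hpos_iff, hi, hj]
  · have hij : i ≠ j := fun h => hj (h ▸ hi)
    simp [hpos_iff, hi, hj, hij]
  · simp [hpos_iff, hi, hj]
  · simp [hpos_iff, hi, hj]
end
end

section
/- Let z ∈ ℝ^K (K ≥ 1) with z_j ≠ τ(z) for every j, where τ(z) is the unique real number with Σ_j max(z_j − τ(z), 0) = 1. Let s ∈ ℝ^K be the indicator vector of S(z) = {j : sparsemax_j(z) > 0} (s_j = 1 if j ∈ S(z), s_j = 0 otherwise). Then the derivative of sparsemax at z, applied to any vector v ∈ ℝ^K, equals s ⊙ (v − v̂·1), where v̂ = (Σ_{j∈S(z)} v_j)/|S(z)|, ⊙ is the coordinatewise (Hadamard) product, and 1 is the all-ones vector; equivalently, the Jacobian matrix is diag(s) − s sᵀ/|S(z)|. -/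
open Finset

noncomputable section

lemma proj_key (K : ℕ) (w y : Fin K → ℝ) (τ' : ℝ)
    (hps : ∑ i, max (w i - τ') 0 = 1) (hy : y ∈ stdSimplex' K) :
    ∑ i, (max (w i - τ') 0 - w i) ^ 2 + ∑ i, (y i - max (w i - τ') 0) ^ 2
      ≤ ∑ i, (y i - w i) ^ 2 := by
  set p : Fin K → ℝ := fun i => max (w i - τ') 0 with hp
  have cross : 0 ≤ ∑ i, (p i - w i) * (y i - p i) := by
    have hterm : ∀ i, -(τ' * (y i - p i)) ≤ (p i - w i) * (y i - p i) := by
      intro i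
      rcases le_or_gt (w i - τ') 0 with h1 | h1
      · have hpi : p i = 0 := max_eq_right h1
        have h2 := hy.1 i
        rw [hpi]; nlinarith
      · have hpi : p i = w i - τ' := max_eq_left h1.le
        rw [hpi]; nlinarith
    have h0 : ∑ i, -(τ' * (y i - p i)) = 0 := by
      have : ∑ i, (y i - p i) = 0 := by
        rw [Finset.sum_sub_distrib, hy.2, hps]; ring
      calc ∑ i, -(τ' * (y i - p i)) = -(τ' * ∑ i, (y i - p i)) := by
            rw [Finset.mul_sum, ← Finset.sum_neg_distrib]
        _ = 0 := by rw [this]; ring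
    calc (0:ℝ) = ∑ i, -(τ' * (y i - p i)) := h0.symm
      _ ≤ _ := Finset.sum_le_sum fun i _ => hterm i
  have expand : ∑ i, (y i - w i)^2
      = ∑ i, (p i - w i)^2 + ∑ i, (y i - p i)^2 + 2 * ∑ i, (p i - w i) * (y i - p i) := by
    rw [Finset.mul_sum, ← Finset.sum_add_distrib, ← Finset.sum_add_distrib]
    exact Finset.sum_congr rfl fun i _ => by ring
  linarith

lemma sparsemax_formula (K : ℕ) (w : Fin K → ℝ) (τ' : ℝ)
    (h : ∑ i, max (w i - τ') 0 = 1) :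
    sparsemax K w = fun i => max (w i - τ') 0 := by
  set p : Fin K → ℝ := fun i => max (w i - τ') 0 with hp
  have hpmem : p ∈ stdSimplex' K := ⟨fun i => le_max_right _ _, h⟩
  have hpmin : ∀ y ∈ stdSimplex' K, ∑ i, (p i - w i)^2 ≤ ∑ i, (y i - w i)^2 := by
    intro y hy
    have h1 := proj_key K w y τ' h hy
    have h2 : 0 ≤ ∑ i, (y i - p i)^2 := Finset.sum_nonneg fun i _ => sq_nonneg _
    linarith
  have hex : ∃ q : Fin K → ℝ, q ∈ stdSimplex' K ∧
      ∀ y ∈ stdSimplex' K, ∑ i, (q i - w i)^2 ≤ ∑ i, (y i - w i)^2 := ⟨p, hpmem, hpmin⟩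
  have hq : sparsemax K w ∈ stdSimplex' K ∧
      ∀ y ∈ stdSimplex' K, ∑ i, (sparsemax K w i - w i)^2 ≤ ∑ i, (y i - w i)^2 :=
    Classical.epsilon_spec hex
  set q := sparsemax K w with hqdef
  have h1 := hq.2 p hpmem
  have h2 := proj_key K w q τ' h hq.1
  have h3 : ∑ i, (q i - p i)^2 ≤ 0 := by linarith
  have h4 : ∑ i, (q i - p i)^2 = 0 :=
    le_antisymm h3 (Finset.sum_nonneg fun i _ => sq_nonneg _)
  funext i
  have h5 : (q i - p i)^2 = 0 := by
    have := (Finset.sum_eq_zero_iff_of_nonneg (fun i _ => sq_nonneg (q i - p i))).mp h4 i (Finset.mem_univ i)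
    exact this
  have := pow_eq_zero_iff (n := 2) (by norm_num) |>.mp h5
  linarith [this]

open Classical in
/-- away from splitting points, with `s` the indicator vector of
the support `S(z)` of `sparsemax(z)`, the derivative of `sparsemax` at `z`
applied to `v` is `s ⊙ (v − v̂·1)` where `v̂ = (Σ_{j ∈ S(z)} v_j)/|S(z)|`. -/
theorem sparsemax_derivative_apply (K : ℕ) (hK : 1 ≤ K) (z : Fin K → ℝ)
    (τ : ℝ) (hτ : ∑ j, max (z j - τ) 0 = 1) (hsplit : ∀ j, z j ≠ τ)
    (s : Fin K → ℝ) (hs : ∀ j, s j = if 0 < sparsemax K z j then 1 else 0) :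
    DifferentiableAt ℝ (sparsemax K) z ∧
    ∀ v : Fin K → ℝ, fderiv ℝ (sparsemax K) z v =
      fun i => s i * (v i -
        (∑ j ∈ Finset.univ.filter (fun l => 0 < sparsemax K z l), v j) /
          ((Finset.univ.filter (fun l => 0 < sparsemax K z l)).card : ℝ)) := by
  classical
  set A : Finset (Fin K) := Finset.univ.filter (fun l => τ < z l) with hA
  have hmemA : ∀ i, i ∈ A ↔ τ < z i := by
    intro i; simp [hA]
  -- sum over A
  have hτA : ∑ j ∈ A, (z j - τ) = 1 := by
    rw [← hτ]
    rw [show (∑ j, max (z j - τ) 0) = ∑ j ∈ A, max (z j - τ) 0 from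
      (Finset.sum_filter_of_ne (fun j _ hne => by
        by_contra hc
        have hle : z j ≤ τ := not_lt.mp hc
        exact hne (max_eq_right (by linarith)))).symm]
    exact Finset.sum_congr rfl fun j hj => (max_eq_left (by
      have := (hmemA j).mp hj; linarith)).symm
  have hAne : A.Nonempty := by
    by_contra hc
    rw [Finset.not_nonempty_iff_eq_empty] at hc
    rw [hc, Finset.sum_empty] at hτA
    norm_num at hτA
  set n : ℕ := A.card with hn
  have hnpos : 0 < n := Finset.card_pos.mpr hAne
  have hnpos' : (0:ℝ) < (n:ℝ) := Nat.cast_pos.mpr hnpos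
  have hnne : (n : ℝ) ≠ 0 := ne_of_gt hnpos'
  -- the linear map
  set Lraw : (Fin K → ℝ) →ₗ[ℝ] (Fin K → ℝ) :=
    { toFun := fun v i => if τ < z i then v i - (∑ j ∈ A, v j) / n else 0
      map_add' := fun v u => by
        funext i
        simp only [Pi.add_apply, Finset.sum_add_distrib]
        split_ifs <;> ring
      map_smul' := fun c v => by
        funext i
        simp only [Pi.smul_apply, smul_eq_mul, RingHom.id_apply, ← Finset.mul_sum]
        split_ifs <;> ring } with hLraw
  set L : (Fin K → ℝ) →L[ℝ] (Fin K → ℝ) := LinearMap.toContinuousLinearMap Lraw with hL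
  have hLapp : ∀ v i, L v i = if τ < z i then v i - (∑ j ∈ A, v j) / n else 0 :=
    fun v i => rfl
  -- the local affine formula
  set τf : (Fin K → ℝ) → ℝ := fun w => τ + (∑ j ∈ A, (w j - z j)) / n with hτf
  set F : (Fin K → ℝ) → (Fin K → ℝ) :=
    fun w i => if τ < z i then w i - τf w else 0 with hF
  -- margin
  set δ : ℝ := Finset.univ.inf' (Finset.univ_nonempty_iff.mpr ⟨⟨0, hK⟩⟩) (fun j => |z j - τ|) with hδ
  have hδpos : 0 < δ := by
    rw [hδ, Finset.lt_inf'_iff]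
    intro j _
    exact abs_pos.mpr (sub_ne_zero_of_ne (hsplit j))
  have hδle : ∀ j, δ ≤ |z j - τ| := fun j =>
    Finset.inf'_le _ (Finset.mem_univ j)
  set ε : ℝ := δ / 3 with hε
  have hεpos : 0 < ε := by rw [hε]; linarith
  -- on the ball, sparsemax = F
  have hloc : ∀ w ∈ Metric.ball z ε, sparsemax K w = F w := by
    intro w hw
    have hwj : ∀ j, |w j - z j| < ε := by
      intro j
      have h1 : dist (w j) (z j) ≤ dist w z := dist_le_pi_dist w z j
      have h2 : dist w z < ε := Metric.mem_ball.mp hw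
      rw [Real.dist_eq] at h1
      linarith
    have hτfb : |τf w - τ| ≤ ε := by
      have h1 : |∑ j ∈ A, (w j - z j)| ≤ ∑ j ∈ A, |w j - z j| :=
        Finset.abs_sum_le_sum_abs _ _
      have h2 : ∑ j ∈ A, |w j - z j| ≤ n * ε := by
        calc ∑ j ∈ A, |w j - z j| ≤ ∑ j ∈ A, ε :=
              Finset.sum_le_sum fun j _ => (hwj j).le
          _ = n * ε := by rw [Finset.sum_const, nsmul_eq_mul]
      have : τf w - τ = (∑ j ∈ A, (w j - z j)) / n := by rw [hτf]; ring
      rw [this, abs_div, abs_of_pos hnpos']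
      rw [div_le_iff₀ hnpos']
      calc |∑ j ∈ A, (w j - z j)| ≤ n * ε := le_trans h1 h2
        _ = ε * n := by ring
    have hbig : ∀ i, τ < z i → 0 < w i - τf w := by
      intro i hi
      have h1 := hwj i
      have h2 := hδle i
      have h3 : δ ≤ z i - τ := by
        rw [abs_of_pos (by linarith)] at h2; linarith
      obtain ⟨h4a, h4b⟩ := abs_lt.mp h1
      obtain ⟨h5a, h5b⟩ := abs_le.mp hτfb
      have hεδ : ε = δ / 3 := hε
      linarith
    have hsmall : ∀ i, ¬ τ < z i → w i - τf w < 0 := by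
      intro i hi
      have hzi : z i < τ := lt_of_le_of_ne (not_lt.mp hi) (hsplit i)
      have h2 := hδle i
      have h3 : δ ≤ τ - z i := by
        rw [abs_of_neg (by linarith)] at h2; linarith
      obtain ⟨h4a, h4b⟩ := abs_lt.mp (hwj i)
      obtain ⟨h5a, h5b⟩ := abs_le.mp hτfb
      have hεδ : ε = δ / 3 := hε
      linarith
    have hsum : ∑ i, max (w i - τf w) 0 = 1 := by
      rw [show (∑ i, max (w i - τf w) 0) = ∑ i ∈ A, max (w i - τf w) 0 from
        (Finset.sum_filter_of_ne (fun i _ hne => by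
          by_contra hc
          exact hne (max_eq_right (hsmall i hc).le))).symm]
      have heq : ∑ i ∈ A, max (w i - τf w) 0 = ∑ i ∈ A, (w i - τf w) :=
        Finset.sum_congr rfl fun i hi =>
          max_eq_left (hbig i ((hmemA i).mp hi)).le
      rw [heq, ← hτA]
      have hS : ∑ j ∈ A, w j - ∑ j ∈ A, z j = ∑ j ∈ A, (w j - z j) := by
        rw [Finset.sum_sub_distrib]
      have hτfval : (n:ℝ) * τf w = n * τ + ∑ j ∈ A, (w j - z j) := by
        rw [hτf]; field_simp
      rw [Finset.sum_sub_distrib, Finset.sum_sub_distrib, Finset.sum_const,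
        Finset.sum_const, nsmul_eq_mul, nsmul_eq_mul]
      linarith
    rw [sparsemax_formula K w (τf w) hsum]
    funext i
    rw [hF]
    by_cases hi : τ < z i
    · simp only [if_pos hi]
      exact max_eq_left (hbig i hi).le
    · simp only [if_neg hi]
      exact max_eq_right (hsmall i hi).le
  -- derivative of F
  set c : Fin K → ℝ := fun i => if τ < z i then -τ + (∑ j ∈ A, z j) / n else 0 with hc
  have hFL : F = fun w => L w + c := by
    funext w i
    rw [hF]
    simp only [Pi.add_apply, hLapp, hc]
    split_ifs with hi
    · have hτfw : τf w = τ + (∑ j ∈ A, (w j - z j)) / (n:ℝ) := rfl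
      rw [hτfw, Finset.sum_sub_distrib]
      field_simp
      ring
    · ring
  have hFderiv : HasFDerivAt F L z := by
    rw [hFL]
    exact L.hasFDerivAt.add_const c
  have hev : sparsemax K =ᶠ[nhds z] F :=
    Filter.eventuallyEq_of_mem (Metric.ball_mem_nhds z hεpos) hloc
  have hsp : HasFDerivAt (sparsemax K) L z := hFderiv.congr_of_eventuallyEq hev
  -- support set equality
  have hz0 : sparsemax K z = fun i => max (z i - τ) 0 := sparsemax_formula K z τ hτ
  have hfilt : Finset.univ.filter (fun l => 0 < sparsemax K z l) = A := by
    apply Finset.filter_congr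
    intro l _
    rw [hz0]
    simp only [lt_max_iff, lt_self_iff_false, or_false, sub_pos, eq_iff_iff]
  refine ⟨hsp.differentiableAt, fun v => ?_⟩
  rw [hsp.fderiv]
  funext i
  rw [hfilt, hs i, hz0]
  simp only [lt_max_iff, lt_self_iff_false, or_false, sub_pos]
  rw [hLapp]
  split_ifs with hi
  · ring
  · ring
end
end
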